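/- Let α, β, δ₁ ∈ (−1, ∞) and κ₁ ∈ ℕ. Then for every z ∈ ℂ with |z| < 1 and every n ∈ ℤ₊, 𝒫_n(z; α, β, δ₁, κ₁) = (Γ(κ₁+δ₁+1)/(Γ(δ₁+1)Γ(κ₁))) ∫₀¹ t^{δ₁} (1−t)^{κ₁−1} J_n(zt; α, β) dt, where J_n(x; α, β) = ₂F₁(−n, n+α+β+1; α+1; x) is the Jacobi polynomial in hypergeometric form. -/

import Mathlib

/-- Pochhammer symbol `(c)_k = c (c+1) ⋯ (c+k-1)`. -/
noncomputable def poch (c : ℂ) (k : ℕ) : ℂ := ∏ j ∈ Finset.range k, (c + j)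

/-- The polynomial `𝒫_n(x;α,β,δ₁,κ₁) = ₃F₂(-n, n+α+β+1, δ₁+1; α+1, κ₁+δ₁+1; x)`. -/
noncomputable def calP1 (α β δ₁ : ℝ) (κ₁ : ℕ) (n : ℕ) (x : ℂ) : ℂ :=
  ∑' k : ℕ, poch (-(n : ℂ)) k * poch ((n : ℂ) + α + β + 1) k *
      poch ((δ₁ : ℂ) + 1) k /
      (poch ((α : ℂ) + 1) k * poch ((κ₁ : ℂ) + (δ₁ : ℂ) + 1) k) *
      x ^ k / (Nat.factorial k)

/-- The Jacobi polynomial `J_n(x;α,β) = ₂F₁(-n, n+α+β+1; α+1; x)`. -/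
noncomputable def J (α β : ℝ) (n : ℕ) (x : ℂ) : ℂ :=
  ∑' k : ℕ, poch (-(n : ℂ)) k * poch ((n : ℂ) + α + β + 1) k /
      poch ((α : ℂ) + 1) k * x ^ k / (Nat.factorial k)

lemma poch_neg_nat_eq_zero {n k : ℕ} (h : n < k) : poch (-(n : ℂ)) k = 0 :=
  Finset.prod_eq_zero (Finset.mem_range.mpr h) (by simp)

lemma J_eq_sum (α β : ℝ) (n : ℕ) (x : ℂ) :
    J α β n x = ∑ k ∈ Finset.range (n + 1),
      (poch (-(n : ℂ)) k * poch ((n : ℂ) + α + β + 1) k / poch ((α : ℂ) + 1) k /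
        (Nat.factorial k : ℂ)) * x ^ k := by
  rw [J, tsum_eq_sum (s := Finset.range (n + 1))
    (fun k hk => by
      have hk' : n + 1 ≤ k := by simpa [Finset.mem_range] using hk
      rw [poch_neg_nat_eq_zero (by omega)]
      ring)]
  exact Finset.sum_congr rfl fun k _ => by ring

lemma calP1_eq_sum (α β δ₁ : ℝ) (κ₁ : ℕ) (n : ℕ) (x : ℂ) :
    calP1 α β δ₁ κ₁ n x = ∑ k ∈ Finset.range (n + 1),
      (poch (-(n : ℂ)) k * poch ((n : ℂ) + α + β + 1) k / poch ((α : ℂ) + 1) k /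
        (Nat.factorial k : ℂ)) *
      (poch ((δ₁ : ℂ) + 1) k / poch ((κ₁ : ℂ) + (δ₁ : ℂ) + 1) k) * x ^ k := by
  rw [calP1, tsum_eq_sum (s := Finset.range (n + 1))
    (fun k hk => by
      have hk' : n + 1 ≤ k := by simpa [Finset.mem_range] using hk
      rw [poch_neg_nat_eq_zero (by omega)]
      ring)]
  exact Finset.sum_congr rfl fun k _ => by ring

lemma Gamma_add_nat {x : ℝ} (hx : 0 < x) (m : ℕ) :
    Real.Gamma (x + m) = (∏ j ∈ Finset.range m, (x + j)) * Real.Gamma x := by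
  induction m with
  | zero => simp
  | succ m ih =>
    have h1 : x + (m + 1 : ℕ) = (x + m) + 1 := by push_cast; ring
    rw [h1, Real.Gamma_add_one (by positivity), ih, Finset.prod_range_succ]
    ring

lemma intervalIntegrable_ofReal {f : ℝ → ℝ} {a b : ℝ}
    (h : IntervalIntegrable f MeasureTheory.volume a b) :
    IntervalIntegrable (fun t => ((f t : ℝ) : ℂ)) MeasureTheory.volume a b :=
  ⟨h.1.ofReal, h.2.ofReal⟩

theorem stmt_8 (α β δ₁ : ℝ) (hα : -1 < α) (hβ : -1 < β) (hδ₁ : -1 < δ₁)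
    (κ₁ : ℕ) (hκ₁ : 1 ≤ κ₁) (z : ℂ) (hz : ‖z‖ < 1) (n : ℕ) :
    calP1 α β δ₁ κ₁ n z =
      ((Real.Gamma ((κ₁ : ℝ) + δ₁ + 1) /
          (Real.Gamma (δ₁ + 1) * Real.Gamma (κ₁ : ℝ)) : ℝ) : ℂ) *
        ∫ t in (0:ℝ)..1,
          ((t ^ δ₁ : ℝ) : ℂ) * (((1 - t) ^ (κ₁ - 1) : ℝ) : ℂ) * J α β n (z * t) := by
  classical
  set c : ℕ → ℂ := fun k =>
    poch (-(n : ℂ)) k * poch ((n : ℂ) + α + β + 1) k / poch ((α : ℂ) + 1) k /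
      (Nat.factorial k : ℂ) with hc
  -- the integrand as a finite sum
  have hJ : ∀ t : ℝ, ((t ^ δ₁ : ℝ) : ℂ) * (((1 - t) ^ (κ₁ - 1) : ℝ) : ℂ) * J α β n (z * t)
      = ∑ k ∈ Finset.range (n + 1),
          ((t ^ δ₁ : ℝ) : ℂ) * ((((1 - t) ^ (κ₁ - 1) : ℝ) : ℂ) * (c k * (z * t) ^ k)) := by
    intro t
    rw [J_eq_sum, Finset.mul_sum]
    exact Finset.sum_congr rfl fun k _ => by ring
  -- integrability of each summand
  have hint : ∀ k ∈ Finset.range (n + 1),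
      IntervalIntegrable (fun t : ℝ =>
        ((t ^ δ₁ : ℝ) : ℂ) * ((((1 - t) ^ (κ₁ - 1) : ℝ) : ℂ) * (c k * (z * t) ^ k)))
        MeasureTheory.volume 0 1 := by
    intro k _
    apply IntervalIntegrable.mul_continuousOn
    · exact intervalIntegrable_ofReal (intervalIntegral.intervalIntegrable_rpow' hδ₁)
    · fun_prop
  -- compute each integral
  have hterm : ∀ k : ℕ,
      (∫ t in (0:ℝ)..1,
        ((t ^ δ₁ : ℝ) : ℂ) * ((((1 - t) ^ (κ₁ - 1) : ℝ) : ℂ) * (c k * (z * t) ^ k)))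
      = c k * z ^ k * Complex.betaIntegral ((δ₁ : ℂ) + k + 1) κ₁ := by
    intro k
    rw [Complex.betaIntegral, ← intervalIntegral.integral_const_mul,
      intervalIntegral.integral_of_le zero_le_one, intervalIntegral.integral_of_le zero_le_one]
    apply MeasureTheory.setIntegral_congr_fun measurableSet_Ioc
    intro t ht
    dsimp only
    have ht0 : (0:ℝ) < t := ht.1
    have htC : (t : ℂ) ≠ 0 := by exact_mod_cast ht0.ne'
    have e1 : ((t ^ δ₁ : ℝ) : ℂ) = (t : ℂ) ^ (δ₁ : ℂ) := Complex.ofReal_cpow ht0.le δ₁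
    have e2 : ((κ₁ : ℂ)) - 1 = ((κ₁ - 1 : ℕ) : ℂ) := by
      push_cast [Nat.cast_sub hκ₁]; ring
    have e3 : (δ₁ : ℂ) + k + 1 - 1 = (δ₁ : ℂ) + (k : ℂ) := by ring
    have e4 : (t : ℂ) ^ ((δ₁ : ℂ) + (k : ℂ)) = (t : ℂ) ^ (δ₁ : ℂ) * (t : ℂ) ^ k := by
      rw [Complex.cpow_add _ _ htC, Complex.cpow_natCast]
    have e5 : (1 - (t : ℂ)) ^ ((κ₁ : ℂ) - 1) = (((1 - t) ^ (κ₁ - 1) : ℝ) : ℂ) := by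
      rw [e2, Complex.cpow_natCast]; push_cast; ring
    rw [e1, e3, e4, e5, mul_pow]
    ring
  -- beta integral evaluation
  have hbeta : ∀ k : ℕ, Complex.betaIntegral ((δ₁ : ℂ) + k + 1) κ₁
      = ((κ₁ - 1).factorial : ℂ) / ∏ j ∈ Finset.range κ₁, ((δ₁ : ℂ) + k + 1 + j) := by
    intro k
    have h1 : ((κ₁ : ℂ)) = (((κ₁ - 1 : ℕ)) : ℂ) + 1 := by
      push_cast [Nat.cast_sub hκ₁]; ring
    have h2 : κ₁ - 1 + 1 = κ₁ := Nat.succ_pred_eq_of_pos hκ₁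
    have hre : 0 < ((δ₁ : ℂ) + k + 1).re := by
      simp only [Complex.add_re, Complex.one_re, Complex.ofReal_re, Complex.natCast_re]
      have hk0 : (0:ℝ) ≤ (k : ℝ) := Nat.cast_nonneg k
      linarith
    rw [h1, Complex.betaIntegral_eval_nat_add_one_right hre, h2]
  -- the coefficient identity
  have hδpos : (0:ℝ) < δ₁ + 1 := by linarith
  have hGκ : Real.Gamma (κ₁ : ℝ) = ((κ₁ - 1).factorial : ℝ) := by
    have h1 : (κ₁ : ℝ) = (((κ₁ - 1 : ℕ)) : ℝ) + 1 := by
      push_cast [Nat.cast_sub hκ₁]; ring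
    rw [h1, Real.Gamma_nat_eq_factorial]
  have hGtop : Real.Gamma ((κ₁ : ℝ) + δ₁ + 1)
      = (∏ j ∈ Finset.range κ₁, (δ₁ + 1 + j)) * Real.Gamma (δ₁ + 1) := by
    have h1 : (κ₁ : ℝ) + δ₁ + 1 = (δ₁ + 1) + κ₁ := by ring
    rw [h1, Gamma_add_nat hδpos κ₁]
  have hcoef : ∀ k : ℕ,
      ((Real.Gamma ((κ₁ : ℝ) + δ₁ + 1) /
          (Real.Gamma (δ₁ + 1) * Real.Gamma (κ₁ : ℝ)) : ℝ) : ℂ) *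
        Complex.betaIntegral ((δ₁ : ℂ) + k + 1) κ₁
      = poch ((δ₁ : ℂ) + 1) k / poch ((κ₁ : ℂ) + (δ₁ : ℂ) + 1) k := by
    intro k
    have hGδ : Real.Gamma (δ₁ + 1) ≠ 0 := (Real.Gamma_pos_of_pos hδpos).ne'
    rw [hbeta k, hGtop, hGκ]
    have hB : ((∏ j ∈ Finset.range κ₁, (δ₁ + 1 + j)) * Real.Gamma (δ₁ + 1) /
        (Real.Gamma (δ₁ + 1) * ((κ₁ - 1).factorial : ℝ)))
        = (∏ j ∈ Finset.range κ₁, (δ₁ + 1 + j)) / ((κ₁ - 1).factorial : ℝ) := by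
      field_simp
    have hof : ((((∏ j ∈ Finset.range κ₁, (δ₁ + 1 + j)) / ((κ₁ - 1).factorial : ℝ)) : ℝ) : ℂ)
        = (∏ j ∈ Finset.range κ₁, ((δ₁ : ℂ) + 1 + j)) / (((κ₁ - 1).factorial : ℕ) : ℂ) := by
      push_cast; ring
    rw [hB, hof]
    have hfac : (((κ₁ - 1).factorial : ℕ) : ℂ) ≠ 0 := by
      exact_mod_cast (κ₁ - 1).factorial_ne_zero
    have nz1 : poch ((κ₁ : ℂ) + (δ₁ : ℂ) + 1) k ≠ 0 := by
      rw [poch, Finset.prod_ne_zero_iff]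
      intro j _
      have hj : ((κ₁ : ℂ) + (δ₁ : ℂ) + 1 + j) = ((((κ₁:ℝ) + δ₁ + 1 + j) : ℝ) : ℂ) := by
        push_cast; ring
      rw [hj, Complex.ofReal_ne_zero]
      have h1 : (0:ℝ) ≤ (κ₁ : ℝ) := Nat.cast_nonneg _
      have h2 : (0:ℝ) ≤ (j : ℝ) := Nat.cast_nonneg _
      linarith
    have nz2 : (∏ j ∈ Finset.range κ₁, ((δ₁ : ℂ) + k + 1 + j)) ≠ 0 := by
      rw [Finset.prod_ne_zero_iff]
      intro j _
      have hj : ((δ₁ : ℂ) + k + 1 + j) = (((δ₁ + k + 1 + j : ℝ)) : ℂ) := by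
        push_cast; ring
      rw [hj, Complex.ofReal_ne_zero]
      have h1 : (0:ℝ) ≤ (k : ℝ) := Nat.cast_nonneg _
      have h2 : (0:ℝ) ≤ (j : ℝ) := Nat.cast_nonneg _
      linarith
    have key2 : (∏ j ∈ Finset.range κ₁, ((δ₁ : ℂ) + 1 + j)) *
          poch ((κ₁ : ℂ) + (δ₁ : ℂ) + 1) k =
        poch ((δ₁ : ℂ) + 1) k * ∏ j ∈ Finset.range κ₁, ((δ₁ : ℂ) + k + 1 + j) := by
      have e1 : poch ((κ₁ : ℂ) + (δ₁ : ℂ) + 1) k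
          = ∏ j ∈ Finset.range k, ((δ₁ : ℂ) + 1 + ((κ₁ + j : ℕ) : ℂ)) := by
        rw [poch]
        exact Finset.prod_congr rfl fun j _ => by push_cast; ring
      have e2 : (∏ j ∈ Finset.range κ₁, ((δ₁ : ℂ) + k + 1 + j))
          = ∏ j ∈ Finset.range κ₁, ((δ₁ : ℂ) + 1 + ((k + j : ℕ) : ℂ)) := by
        exact Finset.prod_congr rfl fun j _ => by push_cast; ring
      rw [e1, e2, poch,
        ← Finset.prod_range_add (fun j => (δ₁ : ℂ) + 1 + (j : ℂ)) κ₁ k,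
        ← Finset.prod_range_add (fun j => (δ₁ : ℂ) + 1 + (j : ℂ)) k κ₁, add_comm k κ₁]
    rw [div_mul_div_comm, div_eq_div_iff (mul_ne_zero hfac nz2) nz1]
    linear_combination (((κ₁ - 1).factorial : ℕ) : ℂ) * key2
  -- assemble
  rw [calP1_eq_sum]
  have : (∫ t in (0:ℝ)..1,
      ((t ^ δ₁ : ℝ) : ℂ) * (((1 - t) ^ (κ₁ - 1) : ℝ) : ℂ) * J α β n (z * t))
      = ∑ k ∈ Finset.range (n + 1), c k * z ^ k *
          Complex.betaIntegral ((δ₁ : ℂ) + k + 1) κ₁ := by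
    rw [intervalIntegral.integral_congr (g := fun t => ∑ k ∈ Finset.range (n + 1),
        ((t ^ δ₁ : ℝ) : ℂ) * ((((1 - t) ^ (κ₁ - 1) : ℝ) : ℂ) * (c k * (z * t) ^ k)))
        (fun t _ => hJ t),
      intervalIntegral.integral_finset_sum hint]
    exact Finset.sum_congr rfl fun k _ => hterm k
  rw [this, Finset.mul_sum]
  refine Finset.sum_congr rfl fun k _ => ?_
  calc (c k * (poch ((δ₁ : ℂ) + 1) k / poch ((κ₁ : ℂ) + (δ₁ : ℂ) + 1) k)) * z ^ k
      = c k * z ^ k * (poch ((δ₁ : ℂ) + 1) k / poch ((κ₁ : ℂ) + (δ₁ : ℂ) + 1) k) := by ring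
    _ = c k * z ^ k * (((Real.Gamma ((κ₁ : ℝ) + δ₁ + 1) /
          (Real.Gamma (δ₁ + 1) * Real.Gamma (κ₁ : ℝ)) : ℝ) : ℂ) *
          Complex.betaIntegral ((δ₁ : ℂ) + k + 1) κ₁) := by rw [hcoef k]
    _ = _ := by ring
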